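/- Let p be prime and (A_p, f) affine connected of order p, with n the order of t mod p. Each orbit of Inn(A_p) on A_p × A_p equals A(k) = { (i, i + t^l k) : i ∈ Z_p, 1 ≤ l ≤ n } for some k ∈ Z_p, and A(k₁) = A(k₂) if and only if k₁ and k₂ lie in the same coset of the subgroup ⟨t⟩ ≤ Z_p^* (or k₁ = k₂ = 0). In particular there are exactly 1 + (p-1)/n distinct orbits. -/

import Mathlib

/-- For `p` prime and `(A_p, f)` affine connected with `t` of order `n` mod
`p`, every orbit of `Inn(A_p)` on `A_p × A_p` is of the form
`A(k) = {(i, i + t^l k) : i ∈ Z_p, 1 ≤ l ≤ n}` for some `k`, and `A(k₁) = A(k₂)` iff `k₁`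
and `k₂` lie in the same coset of `⟨t⟩ ≤ Z_p^*` (or `k₁ = k₂ = 0`), i.e. iff
`k₂ = t^l * k₁` for some `l`. In particular there are exactly `1 + (p-1)/n` distinct
orbits. -/
theorem stmt16 (p n : ℕ) (hp : p.Prime) (t : ZMod p) (ht0 : t ≠ 0) (ht1 : t ≠ 1)
    (horder : orderOf t = n)
    (Inn : Subgroup (Equiv.Perm (ZMod p)))
    (hInn : Inn = Subgroup.closure
      {σ : Equiv.Perm (ZMod p) | ∃ j : ZMod p, ∀ x, σ x = t * x + (1 - t) * j})
    (A : ZMod p → Set (ZMod p × ZMod p))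
    (hA : ∀ k, A k = {q | ∃ (i : ZMod p) (l : ℕ), 1 ≤ l ∧ l ≤ n ∧ q = (i, i + t ^ l * k)}) :
    (∀ q : ZMod p × ZMod p, ∃ k : ZMod p, MulAction.orbit Inn q = A k) ∧
    (∀ k₁ k₂ : ZMod p, A k₁ = A k₂ ↔ ∃ l : ℕ, k₂ = t ^ l * k₁) ∧
    Nat.card (Set.range A) = 1 + (p - 1) / n := by
  haveI : Fact p.Prime := ⟨hp⟩
  have hfin : IsOfFinOrder t := by
    rw [isOfFinOrder_iff_pow_eq_one]
    exact ⟨p - 1, Nat.sub_pos_of_lt hp.one_lt, ZMod.pow_card_sub_one_eq_one ht0⟩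
  have hn : 0 < n := horder ▸ hfin.orderOf_pos
  have htn : t ^ n = 1 := horder ▸ pow_orderOf_eq_one t
  -- reduce arbitrary natural power to one with exponent in [1, n]
  have hred : ∀ l : ℕ, ∃ l', 1 ≤ l' ∧ l' ≤ n ∧ t ^ l' = t ^ l := by
    intro l
    rcases Nat.eq_zero_or_pos (l % n) with h0 | h0
    · refine ⟨n, hn, le_refl n, ?_⟩
      rw [htn, ← pow_mod_orderOf, horder, h0, pow_zero]
    · refine ⟨l % n, h0, le_of_lt (Nat.mod_lt _ hn), ?_⟩
      rw [← horder, pow_mod_orderOf]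
  -- inverse powers
  have hinv : ∀ a : ℕ, t ^ (a * (n - 1)) * t ^ a = 1 := by
    intro a
    rw [← pow_add]
    have : a * (n - 1) + a = n * a := by
      cases n with
      | zero => omega
      | succ m => simp [Nat.succ_sub_one]; ring
    rw [this, pow_mul, htn, one_pow]
  -- affine permutations
  set aff : ℕ → ZMod p → Equiv.Perm (ZMod p) :=
    fun l c => (Equiv.mulLeft₀ (t ^ l) (pow_ne_zero l ht0)).trans (Equiv.addRight c) with haff
  have haff_apply : ∀ l c x, aff l c x = t ^ l * x + c := by
    intro l c x
    simp [haff, Equiv.mulLeft₀]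
  have ht1' : (1 : ZMod p) - t ≠ 0 := sub_ne_zero.mpr (Ne.symm ht1)
  have hmem1 : ∀ c, aff 1 c ∈ Inn := by
    intro c
    rw [hInn]
    apply Subgroup.subset_closure
    refine ⟨(1 - t)⁻¹ * c, fun x => ?_⟩
    rw [haff_apply, pow_one, ← mul_assoc, mul_inv_cancel₀ ht1', one_mul]
  have hmem : ∀ l c, aff l c ∈ Inn := by
    intro l
    induction l with
    | zero =>
      intro c
      have key : aff 0 c * aff 1 0 = aff 1 c := by
        ext x
        simp only [Equiv.Perm.mul_apply, haff_apply, pow_one, pow_zero, one_mul, add_zero]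
      have : aff 0 c = aff 1 c * (aff 1 0)⁻¹ := by
        rw [← key, mul_assoc, mul_inv_cancel, mul_one]
      rw [this]
      exact mul_mem (hmem1 c) (inv_mem (hmem1 0))
    | succ m ih =>
      intro c
      have key : aff (m + 1) c = aff 1 c * aff m 0 := by
        ext x
        simp only [Equiv.Perm.mul_apply, haff_apply, pow_one, add_zero, pow_succ]
        ring
      rw [key]
      exact mul_mem (hmem1 c) (ih 0)
  -- every element of Inn is affine
  have hform : ∀ σ : Equiv.Perm (ZMod p), σ ∈ Inn →
      ∃ (l : ℕ) (c : ZMod p), ∀ x, σ x = t ^ l * x + c := by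
    intro σ hσ
    rw [hInn] at hσ
    induction hσ using Subgroup.closure_induction with
    | mem x hx =>
      obtain ⟨j, hj⟩ := hx
      exact ⟨1, (1 - t) * j, by simpa [pow_one] using hj⟩
    | one => exact ⟨0, 0, fun x => by simp⟩
    | mul x y hx hy ihx ihy =>
      obtain ⟨a, c, hc⟩ := ihx
      obtain ⟨b, d, hd⟩ := ihy
      refine ⟨a + b, t ^ a * d + c, fun z => ?_⟩
      rw [Equiv.Perm.mul_apply, hc, hd, pow_add]
      ring
    | inv x hx ihx =>
      obtain ⟨a, c, hc⟩ := ihx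
      refine ⟨a * (n - 1), -(t ^ (a * (n - 1)) * c), fun z => ?_⟩
      apply x.injective
      rw [show x (x⁻¹ z) = z from x.apply_symm_apply z, hc]
      have := hinv a
      symm
      calc t ^ a * (t ^ (a * (n - 1)) * z + -(t ^ (a * (n - 1)) * c)) + c
          = (t ^ (a * (n - 1)) * t ^ a) * z - (t ^ (a * (n - 1)) * t ^ a) * c + c := by ring
        _ = z := by rw [this]; ring
  -- membership characterization of A k
  have hAk : ∀ k (q : ZMod p × ZMod p), q ∈ A k ↔ ∃ l : ℕ, q.2 = q.1 + t ^ l * k := by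
    intro k q
    rw [hA]
    constructor
    · rintro ⟨i, l, -, -, rfl⟩
      exact ⟨l, rfl⟩
    · rintro ⟨l, hl⟩
      obtain ⟨l', h1, h2, h3⟩ := hred l
      exact ⟨q.1, l', h1, h2, by rw [Prod.ext_iff]; exact ⟨rfl, by rw [hl, h3]⟩⟩
  -- Goal 1: orbits
  have goal1 : ∀ q : ZMod p × ZMod p, MulAction.orbit Inn q = A (q.2 - q.1) := by
    intro q
    ext r
    rw [MulAction.mem_orbit_iff, hAk]
    constructor
    · rintro ⟨⟨σ, hσ⟩, rfl⟩
      obtain ⟨l, c, hc⟩ := hform σ hσ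
      refine ⟨l, ?_⟩
      have h1 : ((⟨σ, hσ⟩ : Inn) • q) = (σ q.1, σ q.2) := rfl
      rw [h1]
      simp only [hc]
      ring
    · rintro ⟨l, hl⟩
      refine ⟨⟨aff l (r.1 - t ^ l * q.1), hmem l _⟩, ?_⟩
      have h1 : ((⟨aff l (r.1 - t ^ l * q.1), hmem l _⟩ : Inn) • q)
          = (aff l (r.1 - t ^ l * q.1) q.1, aff l (r.1 - t ^ l * q.1) q.2) := rfl
      rw [h1, haff_apply, haff_apply, Prod.ext_iff]
      refine ⟨by ring, ?_⟩
      show t ^ l * q.2 + (r.1 - t ^ l * q.1) = r.2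
      rw [hl]
      ring
  -- Goal 2
  have goal2 : ∀ k₁ k₂ : ZMod p, A k₁ = A k₂ ↔ ∃ l : ℕ, k₂ = t ^ l * k₁ := by
    intro k₁ k₂
    constructor
    · intro h
      have h2 : ((0 : ZMod p), k₂) ∈ A k₂ := (hAk k₂ _).mpr ⟨0, by simp⟩
      rw [← h, hAk] at h2
      obtain ⟨l, hl⟩ := h2
      exact ⟨l, by simpa using hl⟩
    · rintro ⟨l, rfl⟩
      ext q
      rw [hAk, hAk]
      constructor
      · rintro ⟨a, ha⟩
        refine ⟨a + l * (n - 1), ?_⟩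
        have key : t ^ (a + l * (n - 1)) * (t ^ l * k₁)
            = t ^ a * ((t ^ (l * (n - 1)) * t ^ l) * k₁) := by
          rw [pow_add]; ring
        rw [ha, key, hinv l, one_mul]
      · rintro ⟨a, ha⟩
        refine ⟨a + l, ?_⟩
        rw [ha, pow_add]
        ring
  -- Goal 3: counting
  refine ⟨fun q => ⟨q.2 - q.1, (goal1 q).symm ▸ rfl⟩, goal2, ?_⟩
  set tu : (ZMod p)ˣ := Units.mk0 t ht0 with htu
  have htuo : orderOf tu = n := by rw [← horder, ← orderOf_units]; rfl
  set H := Subgroup.zpowers tu with hH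
  have hQcard : Nat.card ((ZMod p)ˣ ⧸ H) = (p - 1) / n := by
    have h1 : Nat.card H * H.index = Nat.card (ZMod p)ˣ := Subgroup.card_mul_index H
    have h2 : Nat.card H = n := by rw [hH, Nat.card_zpowers, htuo]
    have h3 : Nat.card (ZMod p)ˣ = p - 1 := by
      rw [Nat.card_eq_fintype_card, ZMod.card_units]
    rw [← Subgroup.index_eq_card, ← h3, ← h1, h2, Nat.mul_div_cancel_left _ hn]
  have hwd : ∀ (u v : (ZMod p)ˣ), (QuotientGroup.leftRel H) u v →
      A (u : ZMod p) = A (v : ZMod p) := by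
    intro u v huv
    have h1 : u⁻¹ * v ∈ H := (QuotientGroup.leftRel_apply).mp huv
    rw [hH, ← mem_powers_iff_mem_zpowers] at h1
    obtain ⟨m, hm⟩ := h1
    have hm' : tu ^ m = u⁻¹ * v := hm
    refine (goal2 _ _).mpr ⟨m, ?_⟩
    have hv : v = u * tu ^ m := by rw [hm']; group
    rw [hv]
    push_cast [htu, Units.val_mk0]
    ring
  set B : ((ZMod p)ˣ ⧸ H) → Set (ZMod p × ZMod p) :=
    Quotient.lift (fun u : (ZMod p)ˣ => A (u : ZMod p)) hwd with hB
  have hBmk : ∀ u : (ZMod p)ˣ, B (QuotientGroup.mk u) = A (u : ZMod p) := fun u => rfl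
  have hBinj : Function.Injective B := by
    intro x y
    obtain ⟨u⟩ := x
    obtain ⟨v⟩ := y
    intro h
    have h' : A (u : ZMod p) = A (v : ZMod p) := h
    obtain ⟨l, hl⟩ := (goal2 _ _).mp h'
    have hmemH : u⁻¹ * v ∈ H := by
      rw [hH, ← mem_powers_iff_mem_zpowers]
      refine ⟨l, Units.ext ?_⟩
      push_cast [htu, Units.val_mk0]
      rw [hl]
      field_simp
    exact Quotient.sound (QuotientGroup.leftRel_apply.mpr hmemH)
  have hA0 : A 0 ∉ Set.range B := by
    rintro ⟨x, hx⟩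
    obtain ⟨u⟩ := x
    obtain ⟨l, hl⟩ := (goal2 (u : ZMod p) 0).mp hx
    exact (mul_ne_zero (pow_ne_zero l ht0) u.ne_zero) hl.symm
  have hrange : Set.range A = insert (A 0) (Set.range B) := by
    ext S
    rw [Set.mem_insert_iff]
    constructor
    · rintro ⟨k, rfl⟩
      rcases eq_or_ne k 0 with rfl | hk
      · exact Or.inl rfl
      · exact Or.inr ⟨QuotientGroup.mk (Units.mk0 k hk), rfl⟩
    · rintro (rfl | ⟨x, rfl⟩)
      · exact ⟨0, rfl⟩
      · obtain ⟨u⟩ := x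
        exact ⟨(u : ZMod p), rfl⟩
  rw [hrange, Nat.card_coe_set_eq,
    Set.ncard_insert_of_notMem hA0 (Set.toFinite _),
    ← Nat.card_coe_set_eq, Nat.card_range_of_injective hBinj, hQcard, Nat.add_comm]
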